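/- Let K be a compact Hausdorff space. If the closed unit ball B_{M(K)}, equipped with the weak* topology (a compact Hausdorff space), admits local compensation, then K admits a B_{M(K)}-compensation function. -/

import Mathlib

open MeasureTheory

noncomputable section

variable {K : Type*} [TopologicalSpace K] [MeasurableSpace K]

/-- The integral of a function against a signed measure. -/
def sInt (μ : SignedMeasure K) (f : K → ℝ) : ℝ :=
  ∫ x, f x ∂μ.toJordanDecomposition.posPart - ∫ x, f x ∂μ.toJordanDecomposition.negPart

/-- The total variation norm of a signed measure. -/
def mNorm (μ : SignedMeasure K) : ℝ := (μ.totalVariation Set.univ).toReal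

/-- `ν` is a compensation of `μ`: if `μ(K) > 0` then `0 ≤ ν ≤ μ⁺` and `ν(K) = μ(K)`;
if `μ(K) ≤ 0` then `ν = 0`. -/
def IsCompensation (μ ν : SignedMeasure K) : Prop :=
  if 0 < μ Set.univ then
    0 ≤ ν ∧ ν ≤ μ.toJordanDecomposition.posPart.toSignedMeasure ∧ ν Set.univ = μ Set.univ
  else ν = 0

/-- A family of signed measures indexed by a topological space is weak*-continuous. -/
def WStarContinuousFamily {T : Type*} [TopologicalSpace T] (F : T → SignedMeasure K) : Prop :=
  ∀ g : C(K, ℝ), Continuous fun t => sInt (F t) g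

/-- Membership in `W(K)`: a weak*-continuous map from `K` into the closed unit ball of the
space `M(K)` of regular Borel signed measures. -/
def MemW (F : K → SignedMeasure K) : Prop :=
  WStarContinuousFamily F ∧ ∀ t, (F t).totalVariation.Regular ∧ mNorm (F t) ≤ 1

/-- `K` admits local compensation: every element of `W(K)` admits a compensation in `W(K)`. -/
def AdmitsLocalCompensation (K : Type*) [TopologicalSpace K] [MeasurableSpace K] : Prop :=
  ∀ F : K → SignedMeasure K, MemW F →
    ∃ G : K → SignedMeasure K, MemW G ∧ ∀ t, IsCompensation (F t) (G t)

/-- The weak* topology on signed measures. -/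
instance wstarTopology : TopologicalSpace (SignedMeasure K) :=
  TopologicalSpace.induced (fun μ (g : C(K, ℝ)) => sInt μ g) inferInstance

/-- `M(K)`: the regular Borel signed measures on `K`, with the weak* topology. -/
def MK (K : Type*) [TopologicalSpace K] [MeasurableSpace K] : Type _ :=
  {μ : SignedMeasure K // μ.totalVariation.Regular}

instance : TopologicalSpace (MK K) := instTopologicalSpaceSubtype

/-- The closed unit ball `B_{M(K)}` of `M(K)`, with the weak* topology. -/
def BMK (K : Type*) [TopologicalSpace K] [MeasurableSpace K] : Type _ :=
  {μ : SignedMeasure K // μ.totalVariation.Regular ∧ mNorm μ ≤ 1}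

instance : TopologicalSpace (BMK K) := instTopologicalSpaceSubtype

/-- A compensation function on `K`: a weak*-to-weak*-continuous map `ξ : M(K) → M(K)` such
that `ξ μ` is a compensation of `μ` for every `μ ∈ M(K)`. -/
def IsCompensationFunction (ξ : MK K → MK K) : Prop :=
  Continuous ξ ∧ ∀ μ : MK K, IsCompensation μ.1 (ξ μ).1

/-- A `B_{M(K)}`-compensation function on `K`. -/
def IsBallCompensationFunction (ξ : BMK K → MK K) : Prop :=
  Continuous ξ ∧ ∀ μ : BMK K, IsCompensation μ.1 (ξ μ).1

/-- The numerical radius of an operator on a real Banach space. -/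
def NumericalRadius {X : Type*} [NormedAddCommGroup X] [NormedSpace ℝ X] (T : X →L[ℝ] X) : ℝ :=
  sSup {r | ∃ (x : X) (φ : X →L[ℝ] ℝ), ‖x‖ = 1 ∧ ‖φ‖ = 1 ∧ φ x = 1 ∧ r = |φ (T x)|}

/-- The Bishop-Phelps-Bollobás property for numerical radius, witnessed by a
given function `δ`. -/
def HasBPBNumericalRadiusWith (X : Type*) [NormedAddCommGroup X] [NormedSpace ℝ X]
    (δ : ℝ → ℝ) : Prop :=
  ∀ ε : ℝ, 0 < ε → ε < 1 →
    ∀ T : X →L[ℝ] X, NumericalRadius T = 1 →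
      ∀ (x : X) (φ : X →L[ℝ] ℝ), ‖x‖ = 1 → ‖φ‖ = 1 → φ x = 1 →
        1 - δ ε ≤ φ (T x) →
        ∃ (T₀ : X →L[ℝ] X) (x₀ : X) (φ₀ : X →L[ℝ] ℝ),
          NumericalRadius T₀ = 1 ∧ ‖x₀‖ = 1 ∧ ‖φ₀‖ = 1 ∧ φ₀ x₀ = 1 ∧
          φ₀ (T₀ x₀) = 1 ∧ NumericalRadius (T - T₀) ≤ ε ∧ ‖x - x₀‖ ≤ ε ∧ ‖φ - φ₀‖ ≤ ε

/-- The Bishop-Phelps-Bollobás property for numerical radius. -/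
def HasBPBNumericalRadius (X : Type*) [NormedAddCommGroup X] [NormedSpace ℝ X] : Prop :=
  ∃ δ : ℝ → ℝ, (∀ ε : ℝ, 0 < ε → ε < 1 → 0 < δ ε ∧ δ ε < 1) ∧ HasBPBNumericalRadiusWith X δ

/-- A closeness function for `K`: a continuous function `c` on
`{(x,y,z) ∈ K³ : y ≠ z}` with values in `[-1,1]` such that `c(x,y,z) = -c(x,z,y)`
whenever `y ≠ z` and `c(x,x,z) = 1` whenever `x ≠ z`. -/
def IsClosenessFunction (K : Type*) [TopologicalSpace K]
    (c : {p : K × K × K // p.2.1 ≠ p.2.2} → ℝ) : Prop :=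
  Continuous c ∧ (∀ p, c p ∈ Set.Icc (-1 : ℝ) 1) ∧
    (∀ (x y z : K) (h : y ≠ z), c ⟨(x, y, z), h⟩ = -c ⟨(x, z, y), h.symm⟩) ∧
    (∀ (x z : K) (h : x ≠ z), c ⟨(x, x, z), h⟩ = 1)

instance (K : Type*) [TopologicalSpace K] [MeasurableSpace K] :
    MeasurableSpace (BMK K) := borel (BMK K)

instance (K : Type*) [TopologicalSpace K] [MeasurableSpace K] :
    BorelSpace (BMK K) := ⟨rfl⟩

section Aux

open Set MeasureTheory
open scoped ENNReal NNReal

namespace Stmt11Aux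

variable {α : Type*} [MeasurableSpace α]

lemma jd_toSignedMeasure (m : Measure α) [IsFiniteMeasure m] :
    m.toSignedMeasure.toJordanDecomposition =
      ⟨m, 0, Measure.MutuallySingular.zero_right⟩ := by
  apply SignedMeasure.toJordanDecomposition_eq
  show m.toSignedMeasure = m.toSignedMeasure - (0 : Measure α).toSignedMeasure
  rw [Measure.toSignedMeasure_zero, sub_zero]

lemma sInt_toSignedMeasure (m : Measure α) [IsFiniteMeasure m] (f : α → ℝ) :
    sInt m.toSignedMeasure f = ∫ x, f x ∂m := by
  unfold sInt
  rw [jd_toSignedMeasure]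
  show (∫ x, f x ∂m) - (∫ x, f x ∂(0 : Measure α)) = ∫ x, f x ∂m
  rw [integral_zero_measure, sub_zero]

lemma tv_toSignedMeasure (m : Measure α) [IsFiniteMeasure m] :
    m.toSignedMeasure.totalVariation = m := by
  unfold SignedMeasure.totalVariation
  rw [jd_toSignedMeasure]
  show m + 0 = m
  rw [add_zero]

lemma jd_of_nonneg {s : SignedMeasure α} (hs : 0 ≤ s) :
    s.toJordanDecomposition =
      ⟨s.toMeasureOfZeroLE Set.univ MeasurableSet.univ
          ((VectorMeasure.le_restrict_univ_iff_le _ _).2 hs), 0,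
        Measure.MutuallySingular.zero_right⟩ := by
  apply SignedMeasure.toJordanDecomposition_eq
  show s = _ - (0 : Measure α).toSignedMeasure
  rw [Measure.toSignedMeasure_zero, sub_zero,
    SignedMeasure.toMeasureOfZeroLE_toSignedMeasure]

lemma negPart_of_nonneg {s : SignedMeasure α} (hs : 0 ≤ s) :
    s.toJordanDecomposition.negPart = 0 := by rw [jd_of_nonneg hs]

lemma posPart_tsm_of_nonneg {s : SignedMeasure α} (hs : 0 ≤ s) :
    s.toJordanDecomposition.posPart.toSignedMeasure = s := by
  have h0 : s.toJordanDecomposition.negPart.toSignedMeasure = 0 := by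
    ext i hi
    rw [Measure.toSignedMeasure_apply_measurable hi, negPart_of_nonneg hs]
    simp
  conv_rhs => rw [← s.toSignedMeasure_toJordanDecomposition]
  show _ = s.toJordanDecomposition.posPart.toSignedMeasure
      - s.toJordanDecomposition.negPart.toSignedMeasure
  rw [h0, sub_zero]

lemma signedMeasure_apply (s : SignedMeasure α) {A : Set α} (hA : MeasurableSet A) :
    s A = (s.toJordanDecomposition.posPart A).toReal
        - (s.toJordanDecomposition.negPart A).toReal := by
  conv_lhs => rw [← s.toSignedMeasure_toJordanDecomposition]
  exact Measure.toSignedMeasure_sub_apply hA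

lemma jd_map {β : Type*} [MeasurableSpace β] (s : SignedMeasure α) {f : α → β}
    (hf : MeasurableEmbedding f) :
    SignedMeasure.toJordanDecomposition (s.map f) =
      ⟨s.toJordanDecomposition.posPart.map f, s.toJordanDecomposition.negPart.map f, by
        obtain ⟨u, hu, hu1, hu2⟩ : ∃ u, MeasurableSet u ∧ s.toJordanDecomposition.posPart u = 0 ∧
            s.toJordanDecomposition.negPart uᶜ = 0 := s.toJordanDecomposition.mutuallySingular
        have hmeas : MeasurableSet (f '' u ∪ (Set.range f)ᶜ) :=
          (hf.measurableSet_image.2 hu).union hf.measurableSet_range.compl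
        refine ⟨f '' u ∪ (Set.range f)ᶜ, hmeas, ?_, ?_⟩
        · rw [Measure.map_apply hf.measurable hmeas]
          have : f ⁻¹' (f '' u ∪ (Set.range f)ᶜ) = u := by
            rw [Set.preimage_union, hf.injective.preimage_image]
            simp
          rw [this]; exact hu1
        · rw [Measure.map_apply hf.measurable hmeas.compl]
          have : f ⁻¹' (f '' u ∪ (Set.range f)ᶜ)ᶜ = uᶜ := by
            rw [Set.preimage_compl, Set.preimage_union, hf.injective.preimage_image]
            simp
          rw [this]; exact hu2⟩ := by
  apply SignedMeasure.toJordanDecomposition_eq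
  ext A hA
  rw [VectorMeasure.map_apply _ hf.measurable hA, signedMeasure_apply s (hf.measurable hA)]
  show _ = (_ - _ : SignedMeasure β) A
  rw [Measure.toSignedMeasure_sub_apply hA, measureReal_def, measureReal_def,
    Measure.map_apply hf.measurable hA, Measure.map_apply hf.measurable hA]

lemma sInt_map_cont {β : Type*} [TopologicalSpace β] [MeasurableSpace β]
    [OpensMeasurableSpace β] (s : SignedMeasure α) {f : α → β}
    (hf : MeasurableEmbedding f) {g : β → ℝ} (hg : Continuous g) :
    sInt (s.map f) g = sInt s (g ∘ f) := by
  unfold sInt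
  rw [jd_map s hf]
  show (∫ x, g x ∂(s.toJordanDecomposition.posPart.map f))
      - (∫ x, g x ∂(s.toJordanDecomposition.negPart.map f)) = _
  rw [integral_map hf.measurable.aemeasurable hg.aestronglyMeasurable,
    integral_map hf.measurable.aemeasurable hg.aestronglyMeasurable]
  rfl

lemma exists_eps {r x : ℝ≥0∞} (h : r < x) (hx : x ≠ ⊤) :
    ∃ ε : ℝ≥0∞, 0 < ε ∧ ε ≠ ⊤ ∧ r + ε + ε = x := by
  refine ⟨(x - r) / 2, ?_, ?_, ?_⟩
  · exact ENNReal.div_pos (tsub_pos_of_lt h).ne' (by norm_num)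
  · exact (ENNReal.div_lt_top (by simpa using (tsub_le_self.trans_lt hx.lt_top).ne) (by norm_num)).ne
  · rw [add_assoc, ENNReal.add_halves, add_tsub_cancel_of_le h.le]

open Classical in
def invOf {β : Type*} [Nonempty α] (f : α → β) (b : β) : α :=
  if h : ∃ a, f a = b then h.choose else Classical.arbitrary α

lemma invOf_comp {β : Type*} [Nonempty α] {f : α → β} (hf : Function.Injective f) (a : α) :
    invOf f (f a) = a := by
  have h : ∃ a', f a' = f a := ⟨a, rfl⟩
  rw [invOf, dif_pos h]
  exact hf h.choose_spec

lemma measurable_invOf {β : Type*} [MeasurableSpace β] [Nonempty α] {f : α → β}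
    (hf : MeasurableEmbedding f) : Measurable (invOf f) := by
  intro S hS
  have hchar : invOf f ⁻¹' S =
      f '' S ∪ ((Set.range f)ᶜ ∩ {b | Classical.arbitrary α ∈ S}) := by
    ext b
    constructor
    · intro hb
      by_cases hbr : b ∈ Set.range f
      · obtain ⟨a, rfl⟩ := hbr
        left
        have : invOf f (f a) = a := invOf_comp hf.injective a
        rw [Set.mem_preimage, this] at hb
        exact ⟨a, hb, rfl⟩
      · right
        refine ⟨hbr, ?_⟩
        have : invOf f b = Classical.arbitrary α := by
          rw [invOf, dif_neg]
          rintro ⟨a, rfl⟩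
          exact hbr ⟨a, rfl⟩
        rwa [Set.mem_preimage, this] at hb
    · rintro (⟨a, ha, rfl⟩ | ⟨hbr, hb⟩)
      · rw [Set.mem_preimage, invOf_comp hf.injective a]
        exact ha
      · have : invOf f b = Classical.arbitrary α := by
          rw [invOf, dif_neg]
          rintro ⟨a, rfl⟩
          exact hbr ⟨a, rfl⟩
        rw [Set.mem_preimage, this]
        exact hb
  rw [hchar]
  by_cases hd : Classical.arbitrary α ∈ S
  · have : {b : β | Classical.arbitrary α ∈ S} = Set.univ := by ext b; simp [hd]
    rw [this, Set.inter_univ]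
    exact (hf.measurableSet_image.2 hS).union hf.measurableSet_range.compl
  · have : {b : β | Classical.arbitrary α ∈ S} = ∅ := by ext b; simp [hd]
    rw [this, Set.inter_empty, Set.union_empty]
    exact hf.measurableSet_image.2 hS

variable [TopologicalSpace α] [OpensMeasurableSpace α]

lemma regular_add {m n : Measure α} [IsFiniteMeasure m] [IsFiniteMeasure n]
    (hm : m.Regular) (hn : n.Regular) : (m + n).Regular := by
  haveI : Measure.OuterRegular (m + n) := by
    constructor
    intro A hA r hr
    rcases eq_or_ne r ⊤ with rfl | hr'
    · exact ⟨Set.univ, subset_univ A, isOpen_univ, measure_lt_top _ _⟩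
    · obtain ⟨ε, hε, hε', hεeq⟩ := exists_eps hr hr'
      obtain ⟨U1, hAU1, hU1o, hU1⟩ := Set.exists_isOpen_lt_add A (measure_ne_top m A) hε.ne'
      obtain ⟨U2, hAU2, hU2o, hU2⟩ := Set.exists_isOpen_lt_add A (measure_ne_top n A) hε.ne'
      refine ⟨U1 ∩ U2, subset_inter hAU1 hAU2, hU1o.inter hU2o, ?_⟩
      calc (m + n) (U1 ∩ U2) ≤ m U1 + n U2 := by
            rw [Measure.add_apply]
            exact add_le_add (measure_mono inter_subset_left)
              (measure_mono inter_subset_right)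
        _ < (m A + ε) + (n A + ε) := ENNReal.add_lt_add hU1 hU2
        _ = (m + n) A + ε + ε := by rw [Measure.add_apply]; ring
        _ = r := hεeq
  refine ⟨fun U hU r hr => ?_⟩
  obtain ⟨ε, hε, hε', hεeq⟩ := exists_eps hr (measure_ne_top _ U)
  obtain ⟨C1, hC1U, hC1c, h1⟩ :=
    hU.measurableSet.exists_isCompact_lt_add (μ := m) (measure_ne_top m U) hε.ne'
  obtain ⟨C2, hC2U, hC2c, h2⟩ :=
    hU.measurableSet.exists_isCompact_lt_add (μ := n) (measure_ne_top n U) hε.ne'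
  refine ⟨C1 ∪ C2, union_subset hC1U hC2U, hC1c.union hC2c, ?_⟩
  have key : r + ε + ε < (m + n) (C1 ∪ C2) + ε + ε := by
    rw [hεeq, Measure.add_apply, Measure.add_apply]
    calc m U + n U < (m C1 + ε) + (n C2 + ε) := ENNReal.add_lt_add h1 h2
      _ ≤ (m (C1 ∪ C2) + ε) + (n (C1 ∪ C2) + ε) := by
          gcongr
          · exact subset_union_left
          · exact subset_union_right
      _ = m (C1 ∪ C2) + n (C1 ∪ C2) + ε + ε := by ring
  exact lt_of_add_lt_add_right (lt_of_add_lt_add_right key)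

lemma regular_of_le [T2Space α] {m ν : Measure α} [IsFiniteMeasure m]
    (hm : m.Regular) (hle : ν ≤ m) : ν.Regular := by
  have hνle : ∀ s, ν s ≤ m s := fun s => Measure.le_iff'.1 hle s
  haveI : IsFiniteMeasure ν := ⟨(hνle _).trans_lt (measure_lt_top _ _)⟩
  haveI : Measure.OuterRegular ν := by
    constructor
    intro A hA r hr
    rcases eq_or_ne r ⊤ with rfl | hr'
    · exact ⟨Set.univ, subset_univ A, isOpen_univ, measure_lt_top _ _⟩
    · obtain ⟨ε, hε, hε', hεeq⟩ := exists_eps hr hr'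
      obtain ⟨U, hAU, hUo, hU⟩ := Set.exists_isOpen_lt_add A (measure_ne_top m A) hε.ne'
      refine ⟨U, hAU, hUo, ?_⟩
      have hdiff : ν (U \ A) ≤ ε := by
        refine (hνle _).trans ?_
        rw [measure_diff hAU hA.nullMeasurableSet (measure_ne_top m A)]
        exact tsub_le_iff_right.2 (by rw [add_comm]; exact hU.le)
      calc ν U ≤ ν A + ν (U \ A) := by
            refine (measure_mono fun x hx => ?_).trans (measure_union_le A (U \ A))
            by_cases h : x ∈ A
            · exact Or.inl h
            · exact Or.inr ⟨hx, h⟩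
        _ ≤ ν A + ε := add_le_add le_rfl hdiff
        _ < ν A + ε + ε := ENNReal.lt_add_right
            (ENNReal.add_ne_top.2 ⟨measure_ne_top ν A, hε'⟩) hε.ne'
        _ ≤ r := hεeq.le
  refine ⟨fun U hU r hr => ?_⟩
  obtain ⟨ε, hε, hε', hεeq⟩ := exists_eps hr (measure_ne_top ν U)
  obtain ⟨C, hCU, hCc, h1⟩ :=
    hU.measurableSet.exists_isCompact_lt_add (μ := m) (measure_ne_top m U) hε.ne'
  refine ⟨C, hCU, hCc, ?_⟩
  have hCm : MeasurableSet C := hCc.isClosed.measurableSet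
  have hdiff : ν (U \ C) ≤ ε := by
    refine (hνle _).trans ?_
    rw [measure_diff hCU hCm.nullMeasurableSet (measure_ne_top m C)]
    exact tsub_le_iff_right.2 (by rw [add_comm]; exact h1.le)
  have hkey : r + ε + ε ≤ ν C + ε := by
    rw [hεeq]
    calc ν U ≤ ν C + ν (U \ C) := by
          refine (measure_mono fun x hx => ?_).trans (measure_union_le C (U \ C))
          by_cases h : x ∈ C
          · exact Or.inl h
          · exact Or.inr ⟨hx, h⟩
      _ ≤ ν C + ε := add_le_add le_rfl hdiff
  have h2 : r + ε ≤ ν C := (ENNReal.add_le_add_iff_right hε').1 hkey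
  have hrt : r ≠ ⊤ := (hr.trans_le le_top).ne
  exact (ENNReal.lt_add_right hrt hε.ne').trans_le h2

lemma regular_map {β : Type*} [TopologicalSpace β] [MeasurableSpace β] [BorelSpace β]
    [T2Space β] {f : α → β} (hf : Topology.IsClosedEmbedding f)
    (m : Measure α) [IsFiniteMeasure m] (hm : m.Regular) : (m.map f).Regular := by
  have hfm : Measurable f := hf.continuous.measurable
  haveI : IsFiniteMeasure (m.map f) := Measure.isFiniteMeasure_map m f
  haveI : Measure.OuterRegular (m.map f) := by
    constructor
    intro A hA r hr
    rw [Measure.map_apply hfm hA] at hr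
    obtain ⟨U, hAU, hUo, hU⟩ := (f ⁻¹' A).exists_isOpen_lt_of_lt r hr
    refine ⟨(f '' Uᶜ)ᶜ, ?_, (hf.isClosedMap _ hUo.isClosed_compl).isOpen_compl, ?_⟩
    · intro b hb
      simp only [Set.mem_compl_iff, Set.mem_image, not_exists, not_and]
      intro a ha hab
      rw [← hab] at hb
      exact ha (hAU hb)
    · rw [Measure.map_apply hfm
        (hf.isClosedMap _ hUo.isClosed_compl).measurableSet.compl]
      have : f ⁻¹' (f '' Uᶜ)ᶜ = U := by
        rw [Set.preimage_compl, hf.injective.preimage_image, compl_compl]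
      rwa [this]
  refine ⟨fun V hV r hr => ?_⟩
  rw [Measure.map_apply hfm hV.measurableSet] at hr
  obtain ⟨C, hCV, hCc, hC⟩ := hm.innerRegular (hV.preimage hf.continuous) r hr
  refine ⟨f '' C, ?_, hCc.image hf.continuous, ?_⟩
  · rintro b ⟨a, ha, rfl⟩
    exact hCV ha
  · rw [Measure.map_apply hfm (hCc.image hf.continuous).isClosed.measurableSet,
      hf.injective.preimage_image]
    exact hC

lemma regular_dirac [T2Space α] [OpensMeasurableSpace α] (x : α) :
    (Measure.dirac x).Regular := by
  haveI : Measure.OuterRegular (Measure.dirac x) := by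
    constructor
    intro A hA r hr
    by_cases hx : x ∈ A
    · refine ⟨Set.univ, subset_univ A, isOpen_univ, ?_⟩
      rwa [measure_univ, ← Measure.dirac_apply_of_mem hx]
    · refine ⟨{x}ᶜ, fun y hy hyx => hx (by rwa [Set.mem_singleton_iff.1 hyx] at hy),
        isOpen_compl_singleton, ?_⟩
      rw [Measure.dirac_apply' _ (measurableSet_singleton x).compl,
        Set.indicator_of_notMem (by simp : x ∉ ({x}ᶜ : Set α)) _]
      rw [Measure.dirac_apply' _ hA, Set.indicator_of_notMem hx _] at hr
      exact hr
  refine ⟨fun U hU r hr => ?_⟩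
  by_cases hx : x ∈ U
  · refine ⟨{x}, Set.singleton_subset_iff.2 hx, isCompact_singleton, ?_⟩
    rw [Measure.dirac_apply_of_mem (Set.mem_singleton x)]
    rwa [Measure.dirac_apply_of_mem hx] at hr
  · rw [Measure.dirac_apply' _ hU.measurableSet, Set.indicator_of_notMem hx] at hr
    exact absurd hr (by simp)

variable [CompactSpace α] [T2Space α] [BorelSpace α]

lemma cont_integrable (g : C(α, ℝ)) (m : Measure α) [IsFiniteMeasure m] :
    Integrable g m :=
  g.continuous.integrable_of_hasCompactSupport (HasCompactSupport.of_compactSpace g)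

lemma measure_le_on_compact {m n : Measure α} [IsFiniteMeasure m] [IsFiniteMeasure n]
    [m.Regular] (h : ∀ g : C(α, ℝ), ∫ x, g x ∂m = ∫ x, g x ∂n) {C : Set α}
    (hC : IsCompact C) : n C ≤ m C := by
  have hCm : MeasurableSet C := hC.isClosed.measurableSet
  rw [Set.measure_eq_iInf_isOpen C m]
  refine le_iInf fun U => le_iInf fun hCU => le_iInf fun hUo => ?_
  obtain ⟨f, hf0, hf1, hficc⟩ := exists_continuous_zero_one_of_isClosed
    hUo.isClosed_compl hC.isClosed
    (Set.disjoint_left.2 fun x hxU hxC => hxU (hCU hxC))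
  have key1 : (n C).toReal ≤ ∫ x, f x ∂n := by
    have : ∫ x, C.indicator 1 x ∂n ≤ ∫ x, f x ∂n := by
      refine integral_mono ((integrable_const (1 : ℝ)).indicator hCm) (cont_integrable f n) ?_
      intro x
      by_cases hx : x ∈ C
      · simp [Set.indicator_of_mem hx, (hf1 hx).symm.le, hf1 hx]
      · simp only [Set.indicator_of_notMem hx]
        exact (hficc x).1
    rwa [MeasureTheory.integral_indicator_one hCm] at this
  have key2 : ∫ x, f x ∂m ≤ (m U).toReal := by
    have : ∫ x, f x ∂m ≤ ∫ x, U.indicator 1 x ∂m := by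
      refine integral_mono (cont_integrable f m)
        ((integrable_const (1 : ℝ)).indicator hUo.measurableSet) ?_
      intro x
      by_cases hx : x ∈ U
      · simp only [Set.indicator_of_mem hx, Pi.one_apply]
        exact (hficc x).2
      · simp only [Set.indicator_of_notMem hx]
        exact (hf0 hx).le
    rwa [MeasureTheory.integral_indicator_one hUo.measurableSet] at this
  have := key1.trans ((h f).symm.le.trans key2)
  exact (ENNReal.toReal_le_toReal (measure_ne_top n C) (measure_ne_top m U)).1 this

lemma measure_ext_of_integral_eq {m n : Measure α} [IsFiniteMeasure m] [IsFiniteMeasure n]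
    [m.Regular] [n.Regular] (h : ∀ g : C(α, ℝ), ∫ x, g x ∂m = ∫ x, g x ∂n) :
    m = n := by
  have hC : ∀ C : Set α, IsCompact C → m C = n C := fun C hCc =>
    le_antisymm (measure_le_on_compact (fun g => (h g).symm) hCc)
      (measure_le_on_compact h hCc)
  have hU : ∀ U : Set α, IsOpen U → m U = n U := by
    intro U hUo
    apply le_antisymm
    · refine le_of_forall_lt fun r hr => ?_
      obtain ⟨C, hCU, hCc, hrC⟩ := Measure.Regular.innerRegular hUo r hr
      exact lt_of_lt_of_le (hC C hCc ▸ hrC) (measure_mono hCU)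
    · refine le_of_forall_lt fun r hr => ?_
      obtain ⟨C, hCU, hCc, hrC⟩ := Measure.Regular.innerRegular hUo r hr
      exact lt_of_lt_of_le ((hC C hCc).symm ▸ hrC) (measure_mono hCU)
  ext A hA
  rw [Set.measure_eq_iInf_isOpen A m, Set.measure_eq_iInf_isOpen A n]
  exact iInf_congr fun U => iInf_congr fun hAU => iInf_congr fun hUo => hU U hUo

end Stmt11Aux
end Aux

section AuxK

open Set MeasureTheory Topology

namespace Stmt11Aux

variable {α : Type*} [TopologicalSpace α] [MeasurableSpace α]

lemma eval_continuous (g : C(α, ℝ)) :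
    Continuous fun μ : BMK α => sInt μ.1 g := by
  have h1 : Continuous fun (μ : SignedMeasure α) (g : C(α, ℝ)) => sInt μ g :=
    continuous_induced_dom
  exact ((continuous_apply g).comp h1).comp continuous_subtype_val

variable [CompactSpace α] [T2Space α] [BorelSpace α]

lemma signedMeasure_ext_of_sInt {s t : SignedMeasure α}
    (hs : s.totalVariation.Regular) (ht : t.totalVariation.Regular)
    (h : ∀ g : C(α, ℝ), sInt s g = sInt t g) : s = t := by
  set a := s.toJordanDecomposition.posPart with hadef
  set b := s.toJordanDecomposition.negPart with hbdef
  set c := t.toJordanDecomposition.posPart with hcdef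
  set d := t.toJordanDecomposition.negPart with hddef
  haveI : IsFiniteMeasure s.totalVariation := by
    unfold SignedMeasure.totalVariation; infer_instance
  haveI : IsFiniteMeasure t.totalVariation := by
    unfold SignedMeasure.totalVariation; infer_instance
  have htva : s.totalVariation = a + b := rfl
  have htvc : t.totalVariation = c + d := rfl
  have haR : a.Regular := regular_of_le hs
    (Measure.le_iff.2 fun A hA => by rw [htva, Measure.add_apply]; exact le_self_add)
  have hbR : b.Regular := regular_of_le hs
    (Measure.le_iff.2 fun A hA => by rw [htva, Measure.add_apply]; exact le_add_self)
  have hcR : c.Regular := regular_of_le ht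
    (Measure.le_iff.2 fun A hA => by rw [htvc, Measure.add_apply]; exact le_self_add)
  have hdR : d.Regular := regular_of_le ht
    (Measure.le_iff.2 fun A hA => by rw [htvc, Measure.add_apply]; exact le_add_self)
  haveI := haR; haveI := hbR; haveI := hcR; haveI := hdR
  haveI : (a + d).Regular := regular_add haR hdR
  haveI : (c + b).Regular := regular_add hcR hbR
  have key : a + d = c + b := by
    apply measure_ext_of_integral_eq
    intro g
    rw [integral_add_measure (cont_integrable g a) (cont_integrable g d),
      integral_add_measure (cont_integrable g c) (cont_integrable g b)]
    have hg := h g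
    unfold sInt at hg
    rw [← hadef, ← hbdef, ← hcdef, ← hddef] at hg
    linarith
  ext A hA
  rw [signedMeasure_apply s hA, signedMeasure_apply t hA, ← hadef, ← hbdef, ← hcdef, ← hddef]
  have hA4 := congrArg (fun μ : Measure α => μ A) key
  simp only [Measure.add_apply] at hA4
  have := congrArg ENNReal.toReal hA4
  rw [ENNReal.toReal_add (measure_ne_top a A) (measure_ne_top d A),
    ENNReal.toReal_add (measure_ne_top c A) (measure_ne_top b A)] at this
  linarith

lemma t2_BMK : T2Space (BMK α) := by
  refine T2Space.of_injective_continuous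
    (f := fun μ : BMK α => fun g : C(α, ℝ) => sInt μ.1 g) ?_ ?_
  · intro μ ν hh
    exact Subtype.ext (signedMeasure_ext_of_sInt μ.2.1 ν.2.1 fun g => congrFun hh g)
  · exact continuous_pi fun g => eval_continuous g

/-- The Dirac embedding of `α` into the ball `BMK α`. -/
def diracBMK (x : α) : BMK α :=
  ⟨(Measure.dirac x).toSignedMeasure, by
    rw [tv_toSignedMeasure]; exact regular_dirac x, by
    show (((Measure.dirac x).toSignedMeasure).totalVariation Set.univ).toReal ≤ 1
    rw [tv_toSignedMeasure]
    simp⟩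

lemma sInt_diracBMK (g : α → ℝ) (x : α) : sInt (diracBMK x).1 g = g x := by
  show sInt (Measure.dirac x).toSignedMeasure g = g x
  rw [sInt_toSignedMeasure, integral_dirac]

lemma continuous_diracBMK : Continuous (diracBMK : α → BMK α) := by
  apply Continuous.subtype_mk
  apply continuous_induced_rng.2
  apply continuous_pi
  intro g
  show Continuous fun x : α => sInt (Measure.dirac x).toSignedMeasure g
  simp only [sInt_toSignedMeasure, integral_dirac]
  exact g.continuous

lemma injective_diracBMK : Function.Injective (diracBMK : α → BMK α) := by
  intro x y hxy
  by_contra hne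
  obtain ⟨f, hf0, hf1, _⟩ := exists_continuous_zero_one_of_isClosed
    (isClosed_singleton (x := x)) (isClosed_singleton (x := y))
    (Set.disjoint_singleton.2 hne)
  have h1 := congrArg (fun μ : BMK α => sInt μ.1 f) hxy
  simp only [sInt_diracBMK] at h1
  rw [hf0 rfl, hf1 rfl] at h1
  norm_num at h1

end Stmt11Aux
end AuxK

/-- If the closed unit ball `B_{M(K)}`, equipped with the weak* topology,
admits local compensation, then `K` admits a `B_{M(K)}`-compensation function. -/
theorem stmt11 (K : Type*) [TopologicalSpace K] [CompactSpace K] [T2Space K]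
    [MeasurableSpace K] [BorelSpace K]
    (h : AdmitsLocalCompensation (BMK K)) :
    ∃ ξ : BMK K → MK K, IsBallCompensationFunction ξ := by
  classical
  rcases isEmpty_or_nonempty K with hKe | hKe
  · refine ⟨fun _ => ⟨0, by rw [SignedMeasure.totalVariation_zero]; infer_instance⟩,
      continuous_const, fun μ => ?_⟩
    have hz : μ.1 Set.univ = 0 := by
      rw [Set.univ_eq_empty_iff.2 hKe]
      exact μ.1.empty
    have hneg : ¬ (0 : ℝ) < μ.1 Set.univ := by rw [hz]; exact lt_irrefl 0
    unfold IsCompensation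
    rw [if_neg hneg]
  · haveI : T2Space (BMK K) := Stmt11Aux.t2_BMK
    set δ : K → BMK K := Stmt11Aux.diracBMK with hδdef
    have hδcont : Continuous δ := Stmt11Aux.continuous_diracBMK
    have hδce : Topology.IsClosedEmbedding δ :=
      hδcont.isClosedEmbedding Stmt11Aux.injective_diracBMK
    have hδme : MeasurableEmbedding δ := hδce.measurableEmbedding
    set F : BMK K → SignedMeasure (BMK K) := fun μ => μ.1.map δ with hFdef
    have hFjd := fun μ : BMK K => Stmt11Aux.jd_map μ.1 hδme
    have hFpos : ∀ μ : BMK K, (F μ).toJordanDecomposition.posPart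
        = μ.1.toJordanDecomposition.posPart.map δ := fun μ => by rw [hFjd μ]
    have hFuniv : ∀ μ : BMK K, F μ Set.univ = μ.1 Set.univ := fun μ => by
      show (μ.1.map δ) Set.univ = μ.1 Set.univ
      rw [VectorMeasure.map_apply _ hδme.measurable MeasurableSet.univ, Set.preimage_univ]
    have htvfin : ∀ s : SignedMeasure K, IsFiniteMeasure s.totalVariation := fun s => by
      unfold SignedMeasure.totalVariation; infer_instance
    have hFtv : ∀ μ : BMK K, (F μ).totalVariation = μ.1.totalVariation.map δ := by
      intro μ
      have h1 : (F μ).totalVariation = (F μ).toJordanDecomposition.posPart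
          + (F μ).toJordanDecomposition.negPart := rfl
      have h2 : μ.1.totalVariation = μ.1.toJordanDecomposition.posPart
          + μ.1.toJordanDecomposition.negPart := rfl
      rw [h1, h2, hFjd μ]
      show μ.1.toJordanDecomposition.posPart.map δ
          + μ.1.toJordanDecomposition.negPart.map δ = _
      rw [Measure.map_add _ _ hδme.measurable]
    have hFmemW : MemW F := by
      constructor
      · intro g
        have heq : (fun μ : BMK K => sInt (F μ) g)
            = fun μ : BMK K => sInt μ.1 ((g.comp ⟨δ, hδcont⟩ : C(K, ℝ)) : K → ℝ) := by
          funext μ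
          exact Stmt11Aux.sInt_map_cont μ.1 hδme g.continuous
        rw [heq]
        exact Stmt11Aux.eval_continuous _
      · intro μ
        haveI := htvfin μ.1
        haveI : μ.1.totalVariation.Regular := μ.2.1
        constructor
        · rw [hFtv μ]
          exact Stmt11Aux.regular_map hδce _ inferInstance
        · show ((F μ).totalVariation Set.univ).toReal ≤ 1
          rw [hFtv μ, Measure.map_apply hδme.measurable MeasurableSet.univ,
            Set.preimage_univ]
          exact μ.2.2
    obtain ⟨G, ⟨hGc, hGreg⟩, hGcomp⟩ := h F hFmemW
    have hGzero : ∀ μ : BMK K, ¬ 0 < μ.1 Set.univ → G μ = 0 := by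
      intro μ hμ
      have hcomp := hGcomp μ
      unfold IsCompensation at hcomp
      rwa [hFuniv μ, if_neg hμ] at hcomp
    have hGpos : ∀ μ : BMK K, 0 ≤ G μ := by
      intro μ
      by_cases hμ : 0 < μ.1 Set.univ
      · have hcomp := hGcomp μ
        unfold IsCompensation at hcomp
        rw [hFuniv μ, if_pos hμ] at hcomp
        exact hcomp.1
      · rw [hGzero μ hμ]
    have hGle : ∀ μ : BMK K,
        G μ ≤ (F μ).toJordanDecomposition.posPart.toSignedMeasure := by
      intro μ
      by_cases hμ : 0 < μ.1 Set.univ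
      · have hcomp := hGcomp μ
        unfold IsCompensation at hcomp
        rw [hFuniv μ, if_pos hμ] at hcomp
        exact hcomp.2.1
      · rw [hGzero μ hμ]
        exact Measure.zero_le_toSignedMeasure _
    have hGuniv : ∀ μ : BMK K, 0 < μ.1 Set.univ → G μ Set.univ = μ.1 Set.univ := by
      intro μ hμ
      have hcomp := hGcomp μ
      unfold IsCompensation at hcomp
      rw [hFuniv μ, if_pos hμ] at hcomp
      exact hFuniv μ ▸ hcomp.2.2
    set P : BMK K → Measure (BMK K) := fun μ => (G μ).toJordanDecomposition.posPart
      with hPdef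
    have hPsm : ∀ μ : BMK K, (P μ).toSignedMeasure = G μ :=
      fun μ => Stmt11Aux.posPart_tsm_of_nonneg (hGpos μ)
    have hPneg : ∀ μ : BMK K, (G μ).toJordanDecomposition.negPart = 0 :=
      fun μ => Stmt11Aux.negPart_of_nonneg (hGpos μ)
    have hPle : ∀ (μ : BMK K) (A : Set (BMK K)), MeasurableSet A →
        P μ A ≤ (μ.1.toJordanDecomposition.posPart.map δ) A := by
      intro μ A hA
      have h1 := VectorMeasure.le_iff.1 (hGle μ) A hA
      have e1 : G μ A = (P μ A).toReal := by
        rw [← hPsm μ]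
        exact Measure.toSignedMeasure_apply_measurable hA
      have e2 : (F μ).toJordanDecomposition.posPart.toSignedMeasure A
          = ((μ.1.toJordanDecomposition.posPart.map δ) A).toReal := by
        rw [Measure.toSignedMeasure_apply_measurable hA, hFpos μ, measureReal_def]
      rw [e1, e2] at h1
      exact (ENNReal.toReal_le_toReal (measure_ne_top _ _) (measure_ne_top _ _)).1 h1
    have hrangemeas : MeasurableSet (Set.range δ) := hδme.measurableSet_range
    have hPnull : ∀ μ : BMK K, P μ (Set.range δ)ᶜ = 0 := by
      intro μ
      have hb := hPle μ _ hrangemeas.compl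
      rw [Measure.map_apply hδme.measurable hrangemeas.compl] at hb
      have hpre : δ ⁻¹' (Set.range δ)ᶜ = ∅ := by
        ext x; simp
      rw [hpre, measure_empty] at hb
      exact le_antisymm hb zero_le
    set ρ : BMK K → K := Stmt11Aux.invOf δ with hρdef
    have hρm : Measurable ρ := Stmt11Aux.measurable_invOf hδme
    have hρδ : ∀ x : K, ρ (δ x) = x := Stmt11Aux.invOf_comp hδme.injective
    set ξ0 : BMK K → SignedMeasure K := fun μ => ((P μ).map ρ).toSignedMeasure
      with hξ0def
    have hbound : ∀ (μ : BMK K) (A : Set K), MeasurableSet A →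
        ((P μ).map ρ) A ≤ μ.1.toJordanDecomposition.posPart A := by
      intro μ A hA
      rw [Measure.map_apply hρm hA]
      refine (hPle μ _ (hρm hA)).trans ?_
      rw [Measure.map_apply hδme.measurable (hρm hA)]
      have hset : δ ⁻¹' (ρ ⁻¹' A) = A := by
        ext x
        simp [Set.mem_preimage, hρδ x]
      rw [hset]
    have hξreg : ∀ μ : BMK K, (ξ0 μ).totalVariation.Regular := by
      intro μ
      rw [hξ0def]
      rw [Stmt11Aux.tv_toSignedMeasure]
      haveI := htvfin μ.1
      refine Stmt11Aux.regular_of_le μ.2.1 (Measure.le_iff.2 fun A hA => ?_)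
      refine (hbound μ A hA).trans ?_
      have h2 : μ.1.totalVariation = μ.1.toJordanDecomposition.posPart
          + μ.1.toJordanDecomposition.negPart := rfl
      rw [h2, Measure.add_apply]
      exact le_self_add
    refine ⟨fun μ => ⟨ξ0 μ, hξreg μ⟩, ?_, ?_⟩
    · apply Continuous.subtype_mk
      apply continuous_induced_rng.2
      apply continuous_pi
      intro g
      show Continuous fun μ : BMK K => sInt (ξ0 μ) g
      have key : ∀ μ : BMK K, sInt (ξ0 μ) g
          = sInt (G μ) (⟨fun ν => sInt ν.1 g, Stmt11Aux.eval_continuous g⟩ : C(BMK K, ℝ)) := by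
        intro μ
        have e1 : sInt (ξ0 μ) g = ∫ ν, g (ρ ν) ∂(P μ) := by
          rw [hξ0def, Stmt11Aux.sInt_toSignedMeasure]
          exact integral_map hρm.aemeasurable g.continuous.aestronglyMeasurable
        have e2 : ∫ ν, g (ρ ν) ∂(P μ) = ∫ ν, sInt ν.1 g ∂(P μ) := by
          refine integral_congr_ae ?_
          have hae : ∀ᵐ ν ∂(P μ), ν ∈ Set.range δ := by
            rw [MeasureTheory.ae_iff]
            exact hPnull μ
          filter_upwards [hae] with ν hν
          obtain ⟨x, rfl⟩ := hν
          show g (ρ (δ x)) = sInt (δ x).1 g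
          rw [hρδ x, hδdef]
          exact (Stmt11Aux.sInt_diracBMK g x).symm
        have e3 : sInt (G μ)
            (⟨fun ν => sInt ν.1 g, Stmt11Aux.eval_continuous g⟩ : C(BMK K, ℝ))
            = (∫ ν, sInt ν.1 g ∂(P μ))
              - ∫ ν, sInt ν.1 g ∂((G μ).toJordanDecomposition.negPart) := rfl
        rw [hPneg μ, integral_zero_measure, sub_zero] at e3
        rw [e1, e2, ← e3]
      exact (hGc (⟨fun ν => sInt ν.1 g, Stmt11Aux.eval_continuous g⟩ : C(BMK K, ℝ))).congr
        fun μ => (key μ).symm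
    · intro μ
      unfold IsCompensation
      by_cases hμ : 0 < μ.1 Set.univ
      · rw [if_pos hμ]
        refine ⟨Measure.zero_le_toSignedMeasure _, ?_, ?_⟩
        · refine VectorMeasure.le_iff.2 fun A hA => ?_
          show ((P μ).map ρ).toSignedMeasure A ≤ _
          rw [Measure.toSignedMeasure_apply_measurable hA,
            Measure.toSignedMeasure_apply_measurable hA]
          exact ENNReal.toReal_mono (measure_ne_top _ _) (hbound μ A hA)
        · show ((P μ).map ρ).toSignedMeasure Set.univ = _
          rw [Measure.toSignedMeasure_apply_measurable MeasurableSet.univ, measureReal_def,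
            Measure.map_apply hρm MeasurableSet.univ, Set.preimage_univ]
          have hPuniv : (P μ Set.univ).toReal = (P μ).toSignedMeasure Set.univ :=
            (Measure.toSignedMeasure_apply_measurable MeasurableSet.univ).symm
          rw [hPuniv, hPsm μ, hGuniv μ hμ]
      · rw [if_neg hμ]
        show ((P μ).map ρ).toSignedMeasure = 0
        have hP0 : P μ = 0 := by
          show (G μ).toJordanDecomposition.posPart = 0
          have hjd : (G μ).toJordanDecomposition = 0 := by
            rw [hGzero μ hμ]
            exact SignedMeasure.toJordanDecomposition_zero
          rw [hjd, JordanDecomposition.zero_posPart]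
        ext A hA
        rw [Measure.toSignedMeasure_apply_measurable hA, hP0, Measure.map_zero]
        simp

end
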